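/- Suppose the multiplier M_{m,Λ,Θ} is well defined and invertible on H, and Θ = {Θ_i} is a g-Bessel sequence with bound B_Θ. Then the family mΛ = {m_i Λ_i} satisfies the lower g-frame condition with bound 1/(B_Θ ‖M_{m,Λ,Θ}^{-1}‖²), i.e., ∑_{i∈J} |m_i|² ‖Λ_i f‖² ≥ ‖f‖²/(B_Θ ‖M_{m,Λ,Θ}^{-1}‖²) for all f ∈ H. -/

import Mathlib

open ContinuousLinearMap
local notation "⟪" x ", " y "⟫" => @inner ℂ _ _ x y

theorem stmt3 {H : Type*} [NormedAddCommGroup H] [InnerProductSpace ℂ H] [CompleteSpace H]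
    {J : Type*} {Hi : J → Type*} [∀ i, NormedAddCommGroup (Hi i)]
    [∀ i, InnerProductSpace ℂ (Hi i)] [∀ i, CompleteSpace (Hi i)]
    (Λ Θ : ∀ i, H →L[ℂ] Hi i) (m : J → ℂ) (BΘ : ℝ)
    (hΘ : ∀ f : H, ∃ s : ℝ, HasSum (fun i => ‖Θ i f‖ ^ 2) s ∧ s ≤ BΘ * ‖f‖ ^ 2)
    (M Minv : H →L[ℂ] H)
    (hM : ∀ f : H, HasSum (fun i => m i • adjoint (Λ i) (Θ i f)) (M f))
    (hinv : M * Minv = 1 ∧ Minv * M = 1) :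
    ∀ f : H, ENNReal.ofReal (‖f‖ ^ 2 / (BΘ * ‖Minv‖ ^ 2)) ≤
      ∑' i, ENNReal.ofReal (‖m i‖ ^ 2 * ‖Λ i f‖ ^ 2) := by
  intro f
  by_cases hf : f = 0
  · simp [hf]
  have hf2 : (0:ℝ) < ‖f‖ ^ 2 := by
    have := norm_pos_iff.mpr hf
    positivity
  rcases le_or_gt (BΘ * ‖Minv‖ ^ 2) 0 with hc | hc
  · have h0 : ‖f‖ ^ 2 / (BΘ * ‖Minv‖ ^ 2) ≤ 0 := by
      rcases lt_or_eq_of_le hc with h | h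
      · exact le_of_lt (div_neg_of_pos_of_neg hf2 h)
      · simp [h]
    rw [ENNReal.ofReal_eq_zero.mpr h0]
    exact zero_le
  -- main case
  have hB : (0:ℝ) < BΘ := by nlinarith [sq_nonneg ‖Minv‖]
  set g := Minv f with hg
  have hMg : M g = f := by
    have := congrArg (fun T => T f) hinv.1
    simpa using this
  have hgne : g ≠ 0 := by
    intro h0
    apply hf
    rw [← hMg, h0, map_zero]
  have hg2 : (0:ℝ) < ‖g‖ ^ 2 := by
    have := norm_pos_iff.mpr hgne
    positivity
  have hgle : ‖g‖ ^ 2 ≤ ‖Minv‖ ^ 2 * ‖f‖ ^ 2 := by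
    have := Minv.le_opNorm f
    nlinarith [norm_nonneg g, norm_nonneg (Minv : H →L[ℂ] H), norm_nonneg f]
  rcases eq_or_ne (∑' i, ENNReal.ofReal (‖m i‖ ^ 2 * ‖Λ i f‖ ^ 2)) ⊤ with hT | hT
  · exact hT ▸ le_top
  -- summability of the real series
  have hnn : ∀ i, (0:ℝ) ≤ ‖m i‖ ^ 2 * ‖Λ i f‖ ^ 2 := fun i => by positivity
  have hsumm : Summable (fun i => ‖m i‖ ^ 2 * ‖Λ i f‖ ^ 2) := by
    have hT' : ∑' i, ((Real.toNNReal (‖m i‖ ^ 2 * ‖Λ i f‖ ^ 2) : NNReal) : ENNReal) ≠ ⊤ := hT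
    have h2 := NNReal.summable_coe.mpr (ENNReal.tsum_coe_ne_top_iff_summable.mp hT')
    exact h2.congr (fun i => Real.coe_toNNReal _ (hnn i))
  set S := ∑' i, ‖m i‖ ^ 2 * ‖Λ i f‖ ^ 2 with hS
  have hSnn : (0:ℝ) ≤ S := tsum_nonneg hnn
  rw [← ENNReal.ofReal_tsum_of_nonneg hnn hsumm]
  apply ENNReal.ofReal_le_ofReal
  rw [div_le_iff₀ hc]
  -- goal: ‖f‖ ^ 2 ≤ S * (BΘ * ‖Minv‖ ^ 2)
  obtain ⟨sθ, hsθ, hsθle⟩ := hΘ g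
  set t := BΘ * ‖g‖ ^ 2 / ‖f‖ ^ 2 with ht
  have htpos : (0:ℝ) < t := by positivity
  have hsC : HasSum (fun i => ⟪f, m i • adjoint (Λ i) (Θ i g)⟫) ⟪f, f⟫ := by
    have h := (innerSL ℂ f).hasSum (hM g)
    rw [hMg] at h
    exact h
  have hpt : ∀ i, ‖⟪f, m i • adjoint (Λ i) (Θ i g)⟫‖ ≤
      (1/(2*t)) * ‖Θ i g‖ ^ 2 + (t/2) * (‖m i‖ ^ 2 * ‖Λ i f‖ ^ 2) := by
    intro i
    have h1 : ‖⟪f, m i • adjoint (Λ i) (Θ i g)⟫‖ ≤ ‖m i‖ * (‖Λ i f‖ * ‖Θ i g‖) := by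
      rw [inner_smul_right, norm_mul, adjoint_inner_right]
      have h2 := norm_inner_le_norm (𝕜 := ℂ) (Λ i f) (Θ i g)
      nlinarith [norm_nonneg (m i)]
    refine le_trans h1 ?_
    have h3 := sq_nonneg (‖Θ i g‖ - t * (‖m i‖ * ‖Λ i f‖))
    have h4 : 2*t*(‖m i‖ * (‖Λ i f‖ * ‖Θ i g‖)) ≤ ‖Θ i g‖ ^ 2 + t^2 * (‖m i‖ ^ 2 * ‖Λ i f‖ ^ 2) := by
      nlinarith
    calc ‖m i‖ * (‖Λ i f‖ * ‖Θ i g‖)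
        = (1/(2*t)) * (2*t*(‖m i‖ * (‖Λ i f‖ * ‖Θ i g‖))) := by
          field_simp
      _ ≤ (1/(2*t)) * (‖Θ i g‖ ^ 2 + t^2 * (‖m i‖ ^ 2 * ‖Λ i f‖ ^ 2)) :=
          mul_le_mul_of_nonneg_left h4 (by positivity)
      _ = (1/(2*t)) * ‖Θ i g‖ ^ 2 + (t/2) * (‖m i‖ ^ 2 * ‖Λ i f‖ ^ 2) := by
          field_simp
  have hd1 : Summable (fun i => (1/(2*t)) * ‖Θ i g‖ ^ 2) := hsθ.summable.mul_left _
  have hd2 : Summable (fun i => (t/2) * (‖m i‖ ^ 2 * ‖Λ i f‖ ^ 2)) := hsumm.mul_left _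
  have hd : Summable (fun i => (1/(2*t)) * ‖Θ i g‖ ^ 2 + (t/2) * (‖m i‖ ^ 2 * ‖Λ i f‖ ^ 2)) :=
    hd1.add hd2
  have hns : Summable (fun i => ‖⟪f, m i • adjoint (Λ i) (Θ i g)⟫‖) :=
    Summable.of_nonneg_of_le (fun i => norm_nonneg _) hpt hd
  have hnorm : ‖(⟪f, f⟫ : ℂ)‖ ≤ ∑' i, ‖⟪f, m i • adjoint (Λ i) (Θ i g)⟫‖ := by
    have h := norm_tsum_le_tsum_norm hns
    rwa [hsC.tsum_eq] at h
  have hbound : ∑' i, ‖⟪f, m i • adjoint (Λ i) (Θ i g)⟫‖ ≤ (1/(2*t)) * sθ + (t/2) * S := by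
    have h := Summable.tsum_le_tsum hpt hns hd
    rwa [hd1.tsum_add hd2, tsum_mul_left, tsum_mul_left, hsθ.tsum_eq] at h
  have hff : ‖(⟪f, f⟫ : ℂ)‖ = ‖f‖ ^ 2 := by
    rw [inner_self_eq_norm_sq_to_K]
    simp
  have hkey : ‖f‖ ^ 2 ≤ (1/(2*t)) * sθ + (t/2) * S := by
    rw [← hff]; exact le_trans hnorm hbound
  have e1 : (1/(2*t)) * (BΘ * ‖g‖ ^ 2) = ‖f‖ ^ 2 / 2 := by
    rw [ht]; field_simp
  have e2 : (t/2) * S = BΘ * ‖g‖ ^ 2 * S / (2 * ‖f‖ ^ 2) := by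
    rw [ht]; ring
  have h6 : ‖f‖ ^ 2 ≤ ‖f‖ ^ 2 / 2 + BΘ * ‖g‖ ^ 2 * S / (2 * ‖f‖ ^ 2) := by
    have h5 : (1/(2*t)) * sθ ≤ ‖f‖ ^ 2 / 2 := by
      rw [← e1]
      exact mul_le_mul_of_nonneg_left hsθle (by positivity)
    rw [← e2]
    linarith
  have h7 : ‖f‖ ^ 2 / 2 ≤ BΘ * ‖g‖ ^ 2 * S / (2 * ‖f‖ ^ 2) := by linarith
  rw [div_le_div_iff₀ (by norm_num) (by positivity)] at h7
  have h8 : ‖f‖ ^ 2 * ‖f‖ ^ 2 ≤ BΘ * ‖g‖ ^ 2 * S := by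
    ring_nf at h7 ⊢
    linarith
  have h9 : BΘ * ‖g‖ ^ 2 * S ≤ BΘ * (‖Minv‖ ^ 2 * ‖f‖ ^ 2) * S :=
    mul_le_mul_of_nonneg_right (mul_le_mul_of_nonneg_left hgle hB.le) hSnn
  rw [← mul_le_mul_iff_left₀ hf2]
  calc ‖f‖ ^ 2 * ‖f‖ ^ 2 ≤ BΘ * (‖Minv‖ ^ 2 * ‖f‖ ^ 2) * S := le_trans h8 h9
    _ = S * (BΘ * ‖Minv‖ ^ 2) * ‖f‖ ^ 2 := by ring
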